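/- Let λ^B > 0, γ > 0 and p^S ∈ [0,1] be real numbers and write q = p^S e^{-γ}. Then for every natural number k, λ^B/(1 - e^{-γ}) - λ^B (1 - q^k)/(1 - q) ≥ λ^B (1 - p^S) e^{-γ} / ((1 - e^{-γ})(1 - p^S e^{-γ})); that is, this quantity is a lower bound on the bias of the SPA filter's constant value relative to the Bayesian predicted expected number of undetected objects at every time step. -/

import Mathlib

/-- With `q = p^S e^{-γ}`, for every time step `k` the bias of the SPA filter's constant
value relative to the Bayesian predicted expected number of undetected objects is
bounded below by `λ^B (1 - p^S) e^{-γ} / ((1 - e^{-γ})(1 - p^S e^{-γ}))`. -/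
theorem spa_bias_lower_bound (lamB γ pS : ℝ) (hlam : 0 < lamB) (hγ : 0 < γ)
    (hpS0 : 0 ≤ pS) (hpS1 : pS ≤ 1) (q : ℝ) (hq : q = pS * Real.exp (-γ)) (k : ℕ) :
    lamB / (1 - Real.exp (-γ)) - lamB * (1 - q ^ k) / (1 - q) ≥
      lamB * (1 - pS) * Real.exp (-γ) /
        ((1 - Real.exp (-γ)) * (1 - pS * Real.exp (-γ))) := by
  subst hq
  have he0 : 0 < Real.exp (-γ) := Real.exp_pos _
  have he1 : Real.exp (-γ) < 1 := by
    rw [Real.exp_lt_one_iff]; linarith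
  have hq0 : 0 ≤ pS * Real.exp (-γ) := by positivity
  have hq1 : pS * Real.exp (-γ) < 1 := by nlinarith
  have h1q : 0 < 1 - pS * Real.exp (-γ) := by linarith
  have h1e : 0 < 1 - Real.exp (-γ) := by linarith
  have hk : 0 ≤ (pS * Real.exp (-γ)) ^ k := pow_nonneg hq0 k
  have key : lamB * (1 - (pS * Real.exp (-γ)) ^ k) / (1 - pS * Real.exp (-γ)) ≤
      lamB / (1 - pS * Real.exp (-γ)) := by
    gcongr
    nlinarith
  have eq1 : lamB / (1 - Real.exp (-γ)) - lamB / (1 - pS * Real.exp (-γ)) =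
      lamB * (1 - pS) * Real.exp (-γ) /
        ((1 - Real.exp (-γ)) * (1 - pS * Real.exp (-γ))) := by
    rw [div_sub_div _ _ h1e.ne' h1q.ne']
    ring
  linarith
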